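/- Let δ₁ ≤ 1/36 be a positive real and let a₁ ≥ a₂ ≥ ⋯ ≥ a_ℓ ≥ 0 be reals with sum a, such that a₁ < δ₁·a. If each a_j is included independently with probability 1/2 and b denotes the sum of included numbers, then Pr(a/3 < b < 2a/3) ≥ 3/4. -/
import Mathlib


open Classical

/-- Sampling lemma: with `a 0 ≥ a 1 ≥ ⋯ ≥ 0`, total sum `a`, largest element `< δ₁ · a`
with `0 < δ₁ ≤ 1/36`, if each number is selected independently with probability 1/2 and
`b` is the sum of the selected numbers, then `Pr(a/3 < b < 2a/3) ≥ 3/4`.  The probability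
is expressed as the total mass `(1/2)^ℓ` of the subsets realizing the event. -/
theorem stmt1 {ℓ : ℕ} (hℓ : 0 < ℓ) (a : Fin ℓ → ℝ) (δ₁ : ℝ)
    (hδpos : 0 < δ₁) (hδ : δ₁ ≤ 1 / 36)
    (hnn : ∀ j, 0 ≤ a j) (hmono : ∀ i j : Fin ℓ, i ≤ j → a j ≤ a i)
    (ha1 : a ⟨0, hℓ⟩ < δ₁ * ∑ i, a i) :
    (3 : ℝ) / 4 ≤
      ∑ S ∈ (Finset.univ : Finset (Fin ℓ)).powerset.filter
          (fun S => (∑ i, a i) / 3 < ∑ j ∈ S, a j ∧ ∑ j ∈ S, a j < 2 * (∑ i, a i) / 3),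
        ((1 : ℝ) / 2) ^ ℓ := by
  classical
  set A : ℝ := ∑ i, a i with hA
  have hApos : 0 < A := by nlinarith [hnn ⟨0, hℓ⟩]
  set P : Finset (Finset (Fin ℓ)) := (Finset.univ : Finset (Fin ℓ)).powerset with hP
  set ε : Finset (Fin ℓ) → Fin ℓ → ℝ := fun S j => if j ∈ S then 1 else -1 with hε
  -- description of ε sums
  have hsum : ∀ S : Finset (Fin ℓ), ∑ j, ε S j * a j = 2 * (∑ j ∈ S, a j) - A := by
    intro S
    have h1 : ∀ j : Fin ℓ, ε S j * a j = 2 * (if j ∈ S then a j else 0) - a j := by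
      intro j; by_cases h : j ∈ S <;> simp [hε, h] <;> ring
    rw [Finset.sum_congr rfl fun j _ => h1 j, Finset.sum_sub_distrib, ← Finset.mul_sum,
      Finset.sum_ite_mem, Finset.univ_inter, hA]
  -- inner sums over powerset
  have hinner : ∀ i j : Fin ℓ, ∑ S ∈ P, ε S i * ε S j
      = if i = j then (2 : ℝ) ^ ℓ else 0 := by
    intro i j
    by_cases hij : i = j
    · subst hij
      rw [if_pos rfl]
      have h1 : ∀ S, ε S i * ε S i = 1 := by
        intro S; by_cases h : i ∈ S <;> simp [hε, h]
      rw [Finset.sum_congr rfl fun S _ => h1 S, Finset.sum_const, hP,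
        Finset.card_powerset, Finset.card_univ, Fintype.card_fin]
      simp
    · rw [if_neg hij]
      have hji : j ≠ i := fun h' => hij h'.symm
      apply Finset.sum_involution
        (g := fun S _ => if i ∈ S then S.erase i else insert i S)
      · intro S _
        by_cases h : i ∈ S
        · have hj : (j ∈ S.erase i) = (j ∈ S) := by
            simp [Finset.mem_erase, hji]
          simp only [if_pos h, hε, hj, Finset.notMem_erase i S, if_neg, if_pos h,
            not_false_iff]
          by_cases hjS : j ∈ S <;> simp [hjS]
        · have hj : (j ∈ insert i S) = (j ∈ S) := by
            simp [Finset.mem_insert, hji]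
          simp only [if_neg h, hε, hj, Finset.mem_insert_self]
          by_cases hjS : j ∈ S <;> simp [hjS, h]
      · intro S _ _
        by_cases h : i ∈ S
        · simp only [if_pos h]
          intro hc
          have := Finset.notMem_erase i S
          rw [hc] at this
          exact this h
        · simp only [if_neg h]
          intro hc
          have := Finset.mem_insert_self i S
          rw [hc] at this
          exact h this
      · intro S _
        by_cases h : i ∈ S
        · rw [if_pos h, if_neg (Finset.notMem_erase i S)]
          exact Finset.insert_erase h
        · rw [if_neg h, if_pos (Finset.mem_insert_self i S)]
          exact Finset.erase_insert h
      · intro S _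
        have hall : ∀ T : Finset (Fin ℓ), T ∈ P := by
          intro T; simp [hP]
        exact hall _
  -- variance identity
  have key : ∑ S ∈ P, (∑ j, ε S j * a j) ^ 2 = 2 ^ ℓ * ∑ j, (a j) ^ 2 := by
    have expand : ∀ S, (∑ j, ε S j * a j) ^ 2
        = ∑ i, ∑ j, (ε S i * ε S j) * (a i * a j) := by
      intro S
      rw [sq, Finset.sum_mul_sum]
      exact Finset.sum_congr rfl fun i _ => Finset.sum_congr rfl fun j _ => by ring
    rw [Finset.sum_congr rfl fun S _ => expand S]
    rw [Finset.sum_comm]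
    have h2 : ∀ i : Fin ℓ, ∑ S ∈ P, ∑ j, (ε S i * ε S j) * (a i * a j)
        = 2 ^ ℓ * (a i) ^ 2 := by
      intro i
      rw [Finset.sum_comm]
      have h3 : ∀ j : Fin ℓ, ∑ S ∈ P, (ε S i * ε S j) * (a i * a j)
          = (if i = j then (2:ℝ)^ℓ else 0) * (a i * a j) := by
        intro j
        rw [← Finset.sum_mul, hinner]
      rw [Finset.sum_congr rfl fun j _ => h3 j]
      simp [Finset.sum_ite_eq, sq]
    rw [Finset.sum_congr rfl fun i _ => h2 i, ← Finset.mul_sum]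
  -- bound the second moment
  have hbound : ∑ j, (a j) ^ 2 ≤ A ^ 2 / 36 := by
    have h0 : ∀ j : Fin ℓ, a j ≤ a ⟨0, hℓ⟩ := by
      intro j
      exact hmono ⟨0, hℓ⟩ j (by simp [Fin.le_def])
    have h1 : ∑ j, (a j) ^ 2 ≤ ∑ j, a ⟨0, hℓ⟩ * a j := by
      apply Finset.sum_le_sum
      intro j _
      have := h0 j
      nlinarith [hnn j]
    rw [← Finset.mul_sum, ← hA] at h1
    nlinarith [mul_lt_mul_of_pos_right ha1 hApos]
  -- Chebyshev
  set p : Finset (Fin ℓ) → Prop :=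
    fun S => A / 3 < ∑ j ∈ S, a j ∧ ∑ j ∈ S, a j < 2 * A / 3 with hp
  have hcards : (P.filter p).card + (P.filter (fun S => ¬ p S)).card = 2 ^ ℓ := by
    rw [Finset.card_filter_add_card_filter_not, hP, Finset.card_powerset,
      Finset.card_univ, Fintype.card_fin]
  have hlow : ∀ S ∈ P.filter (fun S => ¬ p S), (A/3)^2 ≤ (∑ j, ε S j * a j) ^ 2 := by
    intro S hS
    rw [Finset.mem_filter] at hS
    rw [hsum S]
    obtain ⟨-, hS⟩ := hS
    simp only [hp] at hS
    push_neg at hS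
    by_cases h : A / 3 < ∑ j ∈ S, a j
    · have h2 := hS h
      nlinarith [hApos]
    · push_neg at h
      nlinarith [hApos]
  have hEc : ((P.filter (fun S => ¬ p S)).card : ℝ) * (A/3)^2 ≤ 2 ^ ℓ * (A^2/36) := by
    calc ((P.filter (fun S => ¬ p S)).card : ℝ) * (A/3)^2
        = ∑ S ∈ P.filter (fun S => ¬ p S), (A/3)^2 := by
          rw [Finset.sum_const, nsmul_eq_mul]
      _ ≤ ∑ S ∈ P.filter (fun S => ¬ p S), (∑ j, ε S j * a j) ^ 2 :=
          Finset.sum_le_sum hlow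
      _ ≤ ∑ S ∈ P, (∑ j, ε S j * a j) ^ 2 := by
          apply Finset.sum_le_sum_of_subset_of_nonneg (Finset.filter_subset _ _)
          intro S _ _
          positivity
      _ = 2 ^ ℓ * ∑ j, (a j) ^ 2 := key
      _ ≤ 2 ^ ℓ * (A^2/36) := by
          apply mul_le_mul_of_nonneg_left hbound
          positivity
  have hEcard : ((P.filter (fun S => ¬ p S)).card : ℝ) ≤ 2 ^ ℓ / 4 := by
    have h9 : (0:ℝ) < A ^ 2 / 9 := by positivity
    have hEc' : ((P.filter (fun S => ¬ p S)).card : ℝ) * (A ^ 2 / 9)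
        ≤ (2 ^ ℓ / 4) * (A ^ 2 / 9) := by
      calc ((P.filter (fun S => ¬ p S)).card : ℝ) * (A ^ 2 / 9)
          = ((P.filter (fun S => ¬ p S)).card : ℝ) * (A / 3) ^ 2 := by ring
        _ ≤ 2 ^ ℓ * (A ^ 2 / 36) := hEc
        _ = (2 ^ ℓ / 4) * (A ^ 2 / 9) := by ring
    exact le_of_mul_le_mul_right hEc' h9
  have hEcard2 : (3:ℝ)/4 * 2 ^ ℓ ≤ ((P.filter p).card : ℝ) := by
    have := hcards
    have h2 : ((P.filter p).card : ℝ) + ((P.filter (fun S => ¬ p S)).card : ℝ) = 2 ^ ℓ := by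
      exact_mod_cast congrArg (Nat.cast : ℕ → ℝ) this
    linarith
  calc (3 : ℝ) / 4 = (3:ℝ)/4 * 2 ^ ℓ * (1/2)^ℓ := by
        rw [mul_assoc, ← mul_pow]
        norm_num
    _ ≤ ((P.filter p).card : ℝ) * (1/2)^ℓ := by
        apply mul_le_mul_of_nonneg_right hEcard2
        positivity
    _ = ∑ S ∈ P.filter p, ((1:ℝ)/2)^ℓ := by
        rw [Finset.sum_const, nsmul_eq_mul]
    _ = _ := by
        apply Finset.sum_congr _ fun _ _ => rfl
        simp only [hp]
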